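/- For a Gamma distribution Γ(m,1), the map t ↦ t·G'(t) is increasing on (0, ∞), where G is the G-transform of Γ(m,1). -/

import Mathlib

open Set Filter Real Topology

namespace TMDG

noncomputable def pf (m t : ℝ) : ℝ := t - m - m * Real.log (t / m)

noncomputable def Gf (m : ℝ) : ℝ → ℝ := fun s : ℝ =>
  if s < m then -Real.sqrt (2 * (s - m - m * Real.log (s / m)))
  else Real.sqrt (2 * (s - m - m * Real.log (s / m)))

noncomputable def Qr (m t : ℝ) : ℝ := (t - m)^2 / (2 * pf m t)



lemma pf_self {m : ℝ} (hm : 0 < m) : pf m m = 0 := by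
  simp [pf, div_self hm.ne']

lemma pf_pos {m t : ℝ} (hm : 0 < m) (ht : 0 < t) (htm : t ≠ m) : 0 < pf m t := by
  have h1 : Real.log (t / m) < t / m - 1 :=
    Real.log_lt_sub_one_of_pos (by positivity) (by
      simp [div_eq_one_iff_eq hm.ne']; exact htm)
  have : m * Real.log (t / m) < m * (t / m - 1) := by
    exact (mul_lt_mul_iff_right₀ hm).2 h1
  have h2 : m * (t / m - 1) = t - m := by field_simp
  simp only [pf]
  nlinarith

lemma hasDerivAt_logdiv {m t : ℝ} (hm : 0 < m) (ht : 0 < t) :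
    HasDerivAt (fun s : ℝ => Real.log (s / m)) (1 / t) t := by
  have h1 : HasDerivAt (fun s : ℝ => s / m) (1 / m) t := by
    simpa using (hasDerivAt_id t).div_const m
  have h2 := h1.log (by positivity : t / m ≠ 0)
  convert h2 using 1
  field_simp

lemma hasDerivAt_pf {m t : ℝ} (hm : 0 < m) (ht : 0 < t) :
    HasDerivAt (pf m) (1 - m / t) t := by
  have h3 : HasDerivAt (fun s : ℝ => m * Real.log (s / m)) (m * (1 / t)) t :=
    (hasDerivAt_logdiv hm ht).const_mul m
  have h4 : HasDerivAt (fun s : ℝ => s - m) 1 t := (hasDerivAt_id t).sub_const m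
  have := h4.sub h3
  have he : (1 : ℝ) - m * (1 / t) = 1 - m / t := by ring
  rw [he] at this
  exact this

lemma mono_aux {f f' : ℝ → ℝ} {s : Set ℝ} (hs : Convex ℝ s) (ho : IsOpen s)
    (hf : ∀ t ∈ s, HasDerivAt f (f' t) t) (h0 : ∀ t ∈ s, 0 ≤ f' t) :
    MonotoneOn f s := by
  have hint : interior s = s := ho.interior_eq
  apply monotoneOn_of_deriv_nonneg hs
  · exact fun t ht => (hf t ht).continuousAt.continuousWithinAt
  · rw [hint]; exact fun t ht => (hf t ht).differentiableAt.differentiableWithinAt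
  · rw [hint]; intro t ht; rw [(hf t ht).deriv]; exact h0 t ht

lemma hasDerivAt_sq {m t : ℝ} : HasDerivAt (fun s : ℝ => (s - m)^2) (2*(t-m)) t := by
  have := ((hasDerivAt_id t).sub_const m).pow 2
  simpa [Pi.pow_def] using this

lemma r_mono {m : ℝ} (hm : 0 < m) :
    MonotoneOn (fun t : ℝ => pf m t - (t - m)^2 / (2*t)) (Ioi 0) := by
  apply mono_aux (f' := fun t => (1 - m/t) - (2*(t-m) * (2*t) - (t-m)^2 * 2)/(2*t)^2)
    (convex_Ioi 0) isOpen_Ioi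
  · intro t ht
    have ht' : (0:ℝ) < t := ht
    have h2 : HasDerivAt (fun s : ℝ => (s - m)^2 / (2*s))
        ((2*(t-m) * (2*t) - (t-m)^2 * 2)/(2*t)^2) t := by
      have hd : HasDerivAt (fun s : ℝ => 2*s) 2 t := by
        simpa using (hasDerivAt_id t).const_mul 2
      exact hasDerivAt_sq.div hd (by positivity)
    exact (hasDerivAt_pf hm ht').sub h2
  · intro t ht
    have ht' : (0:ℝ) < t := ht
    have : (1 - m/t) - (2*(t-m) * (2*t) - (t-m)^2 * 2)/(2*t)^2 = (t-m)^2/(2*t^2) := by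
      field_simp; ring
    rw [this]; positivity

lemma s_mono {m : ℝ} (hm : 0 < m) :
    MonotoneOn (fun t : ℝ => (t - m)^2 / (2*m) - pf m t) (Ioi 0) := by
  apply mono_aux (f' := fun t => 2*(t-m)/(2*m) - (1 - m/t)) (convex_Ioi 0) isOpen_Ioi
  · intro t ht
    have ht' : (0:ℝ) < t := ht
    exact (hasDerivAt_sq.div_const (2*m)).sub (hasDerivAt_pf hm ht')
  · intro t ht
    have ht' : (0:ℝ) < t := ht
    have : 2*(t-m)/(2*m) - (1 - m/t) = (t-m)^2/(m*t) := by
      field_simp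
    rw [this]; positivity

lemma w_mono {m : ℝ} (hm : 0 < m) :
    MonotoneOn (fun t : ℝ => t - m^2/t - 2*m*Real.log (t/m)) (Ioi 0) := by
  apply mono_aux (f' := fun t => 1 - m^2 * (-(t^2)⁻¹) - 2*m*(1/t)) (convex_Ioi 0) isOpen_Ioi
  · intro t ht
    have ht' : (0:ℝ) < t := ht
    have h1 : HasDerivAt (fun s : ℝ => m^2 / s) (m^2 * (-(t^2)⁻¹)) t := by
      simpa [div_eq_mul_inv] using (hasDerivAt_inv ht'.ne').const_mul (m^2)
    have h2 : HasDerivAt (fun s : ℝ => 2*m*Real.log (s/m)) (2*m*(1/t)) t :=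
      (hasDerivAt_logdiv hm ht').const_mul (2*m)
    exact ((hasDerivAt_id t).sub h1).sub h2
  · intro t ht
    have ht' : (0:ℝ) < t := ht
    have : 1 - m^2 * (-(t^2)⁻¹) - 2*m*(1/t) = (t-m)^2/t^2 := by
      field_simp; ring
    rw [this]; positivity

-- bounds
lemma pf_lb_left {m t : ℝ} (hm : 0 < m) (ht : 0 < t) (h : t ≤ m) :
    (t - m)^2 / (2*m) ≤ pf m t := by
  have := s_mono hm (mem_Ioi.2 ht) (mem_Ioi.2 hm) h
  simp only [pf_self hm, sub_self] at this
  simp only [ne_eq, zero_pow, OfNat.ofNat_ne_zero, not_false_eq_true, zero_div, zero_sub] at this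
  linarith

lemma pf_ub_right {m t : ℝ} (hm : 0 < m) (h : m ≤ t) :
    pf m t ≤ (t - m)^2 / (2*m) := by
  have := s_mono hm (mem_Ioi.2 hm) (mem_Ioi.2 (lt_of_lt_of_le hm h)) h
  simp only [pf_self hm, sub_self] at this
  simp only [ne_eq, zero_pow, OfNat.ofNat_ne_zero, not_false_eq_true, zero_div, zero_sub] at this
  linarith

lemma pf_lb_right {m t : ℝ} (hm : 0 < m) (h : m ≤ t) :
    (t - m)^2 / (2*t) ≤ pf m t := by
  have := r_mono hm (mem_Ioi.2 hm) (mem_Ioi.2 (lt_of_lt_of_le hm h)) h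
  simp only [pf_self hm, sub_self] at this
  simp only [ne_eq, zero_pow, OfNat.ofNat_ne_zero, not_false_eq_true, zero_div, sub_zero] at this
  linarith

lemma pf_ub_left {m t : ℝ} (hm : 0 < m) (ht : 0 < t) (h : t ≤ m) :
    pf m t ≤ (t - m)^2 / (2*t) := by
  have := r_mono hm (mem_Ioi.2 ht) (mem_Ioi.2 hm) h
  simp only [pf_self hm, sub_self] at this
  simp only [ne_eq, zero_pow, OfNat.ofNat_ne_zero, not_false_eq_true, zero_div, sub_zero] at this
  linarith

lemma w_sign {m t : ℝ} (hm : 0 < m) (ht : 0 < t) :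
    0 ≤ (t - m) * (2 * pf m t - (t-m)^2/t) := by
  have hw : 2 * pf m t - (t-m)^2/t = t - m^2/t - 2*m*Real.log (t/m) := by
    simp only [pf]; field_simp; ring
  have hwm : m - m^2/m - 2*m*Real.log (m/m) = 0 := by
    rw [div_self hm.ne']; field_simp; simp
  rw [hw]
  rcases le_total m t with h | h
  · have := w_mono hm (mem_Ioi.2 hm) (mem_Ioi.2 ht) h
    simp only [hwm] at this
    exact mul_nonneg (by linarith) this
  · have := w_mono hm (mem_Ioi.2 ht) (mem_Ioi.2 hm) h
    simp only [hwm] at this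
    exact (by nlinarith : (0:ℝ) ≤ (t - m) * (t - m^2/t - 2*m*Real.log (t/m)))

lemma sqrt2pf_hasDerivAt {m t : ℝ} (hm : 0 < m) (ht : 0 < t) (htm : t ≠ m) :
    HasDerivAt (fun s : ℝ => Real.sqrt (2 * pf m s))
      ((2 * (1 - m/t)) / (2 * Real.sqrt (2 * pf m t))) t := by
  have h1 : HasDerivAt (fun s : ℝ => 2 * pf m s) (2 * (1 - m/t)) t :=
    (hasDerivAt_pf hm ht).const_mul 2
  exact h1.sqrt (by have := pf_pos hm ht htm; positivity)

lemma hasDerivAt_Gf_gt {m t : ℝ} (hm : 0 < m) (ht : m < t) :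
    HasDerivAt (Gf m) ((2 * (1 - m/t)) / (2 * Real.sqrt (2 * pf m t))) t := by
  have ht0 : 0 < t := hm.trans ht
  apply (sqrt2pf_hasDerivAt hm ht0 (ne_of_gt ht)).congr_of_eventuallyEq
  filter_upwards [Ioi_mem_nhds ht] with s hs
  have hs' : m < s := hs
  simp only [Gf, pf, if_neg (not_lt.2 (le_of_lt hs'))]

lemma hasDerivAt_Gf_lt {m t : ℝ} (hm : 0 < m) (ht0 : 0 < t) (ht : t < m) :
    HasDerivAt (Gf m) (-((2 * (1 - m/t)) / (2 * Real.sqrt (2 * pf m t)))) t := by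
  apply ((sqrt2pf_hasDerivAt hm ht0 (ne_of_lt ht)).neg).congr_of_eventuallyEq
  filter_upwards [Iio_mem_nhds ht] with s hs
  have hs' : s < m := hs
  simp only [Gf, pf, if_pos hs', Pi.neg_apply]

lemma t_mul_deriv_off {m t : ℝ} (hm : 0 < m) (ht0 : 0 < t) (htm : t ≠ m) :
    t * deriv (Gf m) t = |t - m| / Real.sqrt (2 * pf m t) := by
  have hS : 0 < Real.sqrt (2 * pf m t) := by
    have := pf_pos hm ht0 htm; positivity
  have key : t * ((2 * (1 - m/t)) / (2 * Real.sqrt (2 * pf m t)))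
      = (t - m) / Real.sqrt (2 * pf m t) := by
    rw [mul_div_assoc', show t*(2*(1-m/t)) = 2*(t-m) by field_simp,
      mul_div_mul_left _ _ (two_ne_zero)]
  rcases lt_or_gt_of_ne htm with h | h
  · rw [(hasDerivAt_Gf_lt hm ht0 h).deriv, abs_of_neg (by linarith : t - m < 0),
      mul_neg, key, neg_div]
  · rw [(hasDerivAt_Gf_gt hm h).deriv, abs_of_pos (by linarith : (0:ℝ) < t - m)]
    exact key

lemma hasDerivAt_Gf_at_m {m : ℝ} (hm : 0 < m) :
    HasDerivAt (Gf m) (Real.sqrt m)⁻¹ m := by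
  rw [hasDerivAt_iff_tendsto_slope]
  have hGm : Gf m m = 0 := by
    simp [Gf, div_self hm.ne']
  have hmax : Tendsto (fun t : ℝ => Real.sqrt (max t m)⁻¹) (𝓝[≠] m) (𝓝 (Real.sqrt m)⁻¹) := by
    have hc : ContinuousAt (fun t : ℝ => Real.sqrt (max t m)⁻¹) m := by
      apply Real.continuous_sqrt.continuousAt.comp
      exact ((continuous_id.max continuous_const).continuousAt).inv₀ (by simp [hm.ne'])
    have := hc.tendsto
    simp only [max_self] at this
    rw [← Real.sqrt_inv]
    exact this.mono_left nhdsWithin_le_nhds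
  have hmin : Tendsto (fun t : ℝ => Real.sqrt (min t m)⁻¹) (𝓝[≠] m) (𝓝 (Real.sqrt m)⁻¹) := by
    have hc : ContinuousAt (fun t : ℝ => Real.sqrt (min t m)⁻¹) m := by
      apply Real.continuous_sqrt.continuousAt.comp
      exact ((continuous_id.min continuous_const).continuousAt).inv₀ (by simp [hm.ne'])
    have := hc.tendsto
    simp only [min_self] at this
    rw [← Real.sqrt_inv]
    exact this.mono_left nhdsWithin_le_nhds
  apply tendsto_of_tendsto_of_tendsto_of_le_of_le' hmax hmin
  · filter_upwards [self_mem_nhdsWithin, nhdsWithin_le_nhds (Ioi_mem_nhds hm)] with t htm ht0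
    have htm' : t ≠ m := htm
    have ht0' : (0:ℝ) < t := ht0
    have hp : 0 < pf m t := pf_pos hm ht0' htm'
    have h2 : (0:ℝ) < (t - m)^2 := by
      have : t - m ≠ 0 := sub_ne_zero.2 htm'
      positivity
    have hslope : slope (Gf m) m t = Real.sqrt (2 * pf m t / (t - m)^2) := by
      rw [slope_def_field, hGm, sub_zero, Real.sqrt_div (by positivity) ((t-m)^2),
        Real.sqrt_sq_eq_abs]
      rcases lt_or_gt_of_ne htm' with h | h
      · rw [abs_of_neg (by linarith : t - m < 0)]
        simp only [Gf, pf, if_pos h, div_neg, neg_div]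
      · rw [abs_of_pos (by linarith : (0:ℝ) < t - m)]
        simp only [Gf, pf, if_neg (not_lt.2 (le_of_lt h))]
    rw [hslope]
    apply Real.sqrt_le_sqrt
    rw [le_div_iff₀ h2]
    rcases le_total t m with h | h
    · rw [max_eq_right h]
      have hb := pf_lb_left hm ht0' h
      have he : m⁻¹*(t-m)^2 = 2*((t-m)^2/(2*m)) := by field_simp
      linarith [he]
    · rw [max_eq_left h]
      have hb := pf_lb_right hm h
      have he : t⁻¹*(t-m)^2 = 2*((t-m)^2/(2*t)) := by field_simp
      linarith [he]
  · filter_upwards [self_mem_nhdsWithin, nhdsWithin_le_nhds (Ioi_mem_nhds hm)] with t htm ht0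
    have htm' : t ≠ m := htm
    have ht0' : (0:ℝ) < t := ht0
    have hp : 0 < pf m t := pf_pos hm ht0' htm'
    have h2 : (0:ℝ) < (t - m)^2 := by
      have : t - m ≠ 0 := sub_ne_zero.2 htm'
      positivity
    have hslope : slope (Gf m) m t = Real.sqrt (2 * pf m t / (t - m)^2) := by
      rw [slope_def_field, hGm, sub_zero, Real.sqrt_div (by positivity) ((t-m)^2),
        Real.sqrt_sq_eq_abs]
      rcases lt_or_gt_of_ne htm' with h | h
      · rw [abs_of_neg (by linarith : t - m < 0)]
        simp only [Gf, pf, if_pos h, div_neg, neg_div]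
      · rw [abs_of_pos (by linarith : (0:ℝ) < t - m)]
        simp only [Gf, pf, if_neg (not_lt.2 (le_of_lt h))]
    rw [hslope]
    apply Real.sqrt_le_sqrt
    rw [div_le_iff₀ h2]
    rcases le_total t m with h | h
    · rw [min_eq_left h]
      have hb := pf_ub_left hm ht0' h
      have he : t⁻¹*(t-m)^2 = 2*((t-m)^2/(2*t)) := by field_simp
      linarith [he]
    · rw [min_eq_right h]
      have hb := pf_ub_right hm h
      have he : m⁻¹*(t-m)^2 = 2*((t-m)^2/(2*m)) := by field_simp
      linarith [he]

lemma Qr_hasDerivAt {m t : ℝ} (hm : 0 < m) (ht : 0 < t) (htm : t ≠ m) :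
    HasDerivAt (Qr m)
      ((2*(t-m) * (2 * pf m t) - (t-m)^2 * (2*(1 - m/t))) / (2 * pf m t)^2) t := by
  have hp := pf_pos hm ht htm
  exact hasDerivAt_sq.div ((hasDerivAt_pf hm ht).const_mul 2) (by positivity)

lemma Qr_deriv_nonneg {m t : ℝ} (hm : 0 < m) (ht : 0 < t) :
    0 ≤ (2*(t-m) * (2 * pf m t) - (t-m)^2 * (2*(1 - m/t))) / (2 * pf m t)^2 := by
  apply div_nonneg _ (sq_nonneg _)
  have he : 2*(t-m) * (2 * pf m t) - (t-m)^2 * (2*(1 - m/t))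
      = 2 * ((t - m) * (2 * pf m t - (t-m)^2/t)) := by
    field_simp
  rw [he]
  exact mul_nonneg (by norm_num) (w_sign hm ht)

lemma Qr_mono_lt {m : ℝ} (hm : 0 < m) : MonotoneOn (Qr m) (Ioo 0 m) := by
  apply mono_aux (f' := fun t => (2*(t-m) * (2 * pf m t) - (t-m)^2 * (2*(1 - m/t))) / (2 * pf m t)^2)
    (convex_Ioo 0 m) isOpen_Ioo
  · exact fun t ht => Qr_hasDerivAt hm ht.1 (ne_of_lt ht.2)
  · exact fun t ht => Qr_deriv_nonneg hm ht.1

lemma Qr_mono_gt {m : ℝ} (hm : 0 < m) : MonotoneOn (Qr m) (Ioi m) := by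
  apply mono_aux (f' := fun t => (2*(t-m) * (2 * pf m t) - (t-m)^2 * (2*(1 - m/t))) / (2 * pf m t)^2)
    (convex_Ioi m) isOpen_Ioi
  · exact fun t ht => Qr_hasDerivAt hm (hm.trans ht) (ne_of_gt ht)
  · exact fun t ht => Qr_deriv_nonneg hm (hm.trans ht)

lemma Qr_le_m {m t : ℝ} (hm : 0 < m) (ht : 0 < t) (htm : t < m) : Qr m t ≤ m := by
  have hp := pf_pos hm ht (ne_of_lt htm)
  rw [Qr, div_le_iff₀ (by positivity)]
  have hb := pf_lb_left hm ht (le_of_lt htm)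
  have he : (t-m)^2 = m * (2 * ((t-m)^2/(2*m))) := by field_simp
  calc (t-m)^2 = m * (2 * ((t-m)^2/(2*m))) := he
    _ ≤ m * (2 * pf m t) := by
        apply mul_le_mul_of_nonneg_left _ hm.le
        linarith

lemma m_le_Qr {m t : ℝ} (hm : 0 < m) (htm : m < t) : m ≤ Qr m t := by
  have ht : 0 < t := hm.trans htm
  have hp := pf_pos hm ht (ne_of_gt htm)
  rw [Qr, le_div_iff₀ (by positivity)]
  have hb := pf_ub_right hm (le_of_lt htm)
  have he : (t-m)^2 = m * (2 * ((t-m)^2/(2*m))) := by field_simp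
  calc m * (2 * pf m t) ≤ m * (2 * ((t-m)^2/(2*m))) := by
        apply mul_le_mul_of_nonneg_left _ hm.le
        linarith
    _ = (t-m)^2 := he.symm


end TMDG
open TMDG in
theorem t_mul_derivG_monotone (m : ℝ) (hm : 0 < m) (G : ℝ → ℝ)
    (hG : G = fun s : ℝ =>
      if s < m then -Real.sqrt (2 * (s - m - m * Real.log (s / m)))
      else Real.sqrt (2 * (s - m - m * Real.log (s / m)))) :
    MonotoneOn (fun t : ℝ => t * deriv G t) (Set.Ioi (0 : ℝ)) := by
  have hGf : G = TMDG.Gf m := hG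
  rw [hGf]
  have hnn : ∀ t : ℝ, 0 < t → 0 ≤ t * deriv (Gf m) t := by
    intro t ht
    by_cases htm : t = m
    · subst htm; rw [(hasDerivAt_Gf_at_m hm).deriv]; positivity
    · rw [t_mul_deriv_off hm ht htm]; positivity
  have hsq : ∀ t : ℝ, 0 < t → t ≠ m → (t * deriv (Gf m) t)^2 = Qr m t := by
    intro t ht htm
    rw [t_mul_deriv_off hm ht htm, div_pow, sq_abs,
      Real.sq_sqrt (by have := pf_pos hm ht htm; positivity : (0:ℝ) ≤ 2 * pf m t)]
    rfl
  have hsqm : (m * deriv (Gf m) m)^2 = m := by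
    rw [(hasDerivAt_Gf_at_m hm).deriv, mul_pow, inv_pow, Real.sq_sqrt hm.le]
    field_simp
  intro a ha b hb hab
  have ha' : (0:ℝ) < a := ha
  have hb' : (0:ℝ) < b := hb
  simp only
  apply le_of_pow_le_pow_left₀ two_ne_zero (hnn b hb')
  rcases lt_trichotomy b m with hbm | hbm | hbm
  · have ham : a < m := lt_of_le_of_lt hab hbm
    rw [hsq a ha' (ne_of_lt ham), hsq b hb' (ne_of_lt hbm)]
    exact Qr_mono_lt hm ⟨ha', ham⟩ ⟨hb', hbm⟩ hab
  · subst hbm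
    by_cases ham : a = b
    · subst ham; exact le_refl _
    · have ham' : a < b := lt_of_le_of_ne hab ham
      rw [hsq a ha' ham, hsqm]
      exact Qr_le_m hm ha' ham'
  · rcases lt_trichotomy a m with ham | ham | ham
    · rw [hsq a ha' (ne_of_lt ham), hsq b hb' (ne_of_gt hbm)]
      exact le_trans (Qr_le_m hm ha' ham) (m_le_Qr hm hbm)
    · subst ham
      rw [hsqm, hsq b hb' (ne_of_gt hbm)]
      exact m_le_Qr hm hbm
    · rw [hsq a ha' (ne_of_gt ham), hsq b hb' (ne_of_gt hbm)]
      exact Qr_mono_gt hm ham hbm hab
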